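/- Let k be an even integer and m ≥ −k/2 an integer. The function θ ↦ kθ/2 + πm/2 − (πm/2)cosθ is continuous and strictly increasing on [0, π] when k ≥ 0 and m > 0, takes the value 0 at θ = 0 and kπ/2 + πm at θ = π; hence the function 2cos(kθ/2 + πm/2 − (πm/2)cosθ) attains the values ±2 alternately at least m + 1 + k/2 times on [0, π]. -/

import Mathlib

open Real Set

theorem cosine_argument_increasing_and_alternates (k m : ℤ) (hk : Even k)
    (hk0 : 0 ≤ k) (hm : 0 < m) (hmk : -(k / 2) ≤ m) :
    ContinuousOn (fun θ : ℝ => (k : ℝ) * θ / 2 + π * m / 2 - π * m / 2 * Real.cos θ)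
        (Icc 0 π) ∧
      StrictMonoOn (fun θ : ℝ => (k : ℝ) * θ / 2 + π * m / 2 - π * m / 2 * Real.cos θ)
        (Icc 0 π) ∧
      ((k : ℝ) * 0 / 2 + π * m / 2 - π * m / 2 * Real.cos 0 = 0) ∧
      ((k : ℝ) * π / 2 + π * m / 2 - π * m / 2 * Real.cos π = k * π / 2 + π * m) ∧
      ∃ θs : Fin ((m + 1 + k / 2).toNat) → ℝ, StrictMono θs ∧
        (∀ j, θs j ∈ Icc 0 π) ∧
        ∀ j, 2 * Real.cos ((k : ℝ) * θs j / 2 + π * m / 2 - π * m / 2 * Real.cos (θs j)) =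
          2 * (-1 : ℝ) ^ (j : ℕ) := by
  set f : ℝ → ℝ := fun θ => (k : ℝ) * θ / 2 + π * m / 2 - π * m / 2 * Real.cos θ with hf
  have hcont : Continuous f := by
    apply Continuous.sub
    · exact (continuous_const.mul continuous_id).div_const 2 |>.add continuous_const
    · exact continuous_const.mul Real.continuous_cos
  have hmono : StrictMonoOn f (Icc 0 π) := by
    apply strictMonoOn_of_deriv_pos (convex_Icc 0 π) hcont.continuousOn
    intro x hx
    rw [interior_Icc] at hx
    have h1 : HasDerivAt (fun θ : ℝ => (k : ℝ) * θ / 2 + π * m / 2) ((k : ℝ) / 2) x := by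
      simpa using (((hasDerivAt_id x).const_mul ((k : ℝ))).div_const 2).add_const (π * m / 2)
    have h2 : HasDerivAt (fun θ : ℝ => π * m / 2 * Real.cos θ)
        (π * m / 2 * (-Real.sin x)) x := (Real.hasDerivAt_cos x).const_mul _
    have hd : HasDerivAt f ((k : ℝ) / 2 + π * m / 2 * Real.sin x) x := by
      have : HasDerivAt f ((k : ℝ) / 2 - π * m / 2 * (-Real.sin x)) x := h1.sub h2
      convert this using 1
      ring
    rw [hd.deriv]
    have hs : 0 < Real.sin x := Real.sin_pos_of_pos_of_lt_pi hx.1 hx.2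
    have hm' : (0 : ℝ) < m := by exact_mod_cast hm
    have hk' : (0 : ℝ) ≤ (k : ℝ) := by exact_mod_cast hk0
    have : 0 < π * m / 2 * Real.sin x := by positivity
    linarith
  have hf0 : f 0 = 0 := by simp [hf]
  have hfπ : f π = k * π / 2 + π * m := by
    simp [hf, Real.cos_pi]; ring
  refine ⟨hcont.continuousOn, hmono, hf0, hfπ, ?_⟩
  obtain ⟨t, rfl⟩ := hk
  have ht2 : (t + t) / 2 = t := by omega
  have ht0 : 0 ≤ t := by omega
  have hNpos : 0 ≤ m + 1 + (t + t) / 2 := by omega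
  have hex : ∀ j : Fin ((m + 1 + (t + t) / 2).toNat), ∃ θ ∈ Icc 0 π, f θ = j * π := by
    intro j
    have hj : (j : ℤ) ≤ m + t := by
      have := j.isLt
      omega
    have hjr : (j : ℝ) ≤ (m : ℝ) + t := by exact_mod_cast hj
    have hmem : (j : ℝ) * π ∈ Icc (f 0) (f π) := by
      rw [hf0, hfπ]
      constructor
      · positivity
      · push_cast
        have : ((t : ℝ) + t) * π / 2 + π * m = ((m : ℝ) + t) * π := by ring
        rw [this]
        exact mul_le_mul_of_nonneg_right hjr pi_pos.le
    have := intermediate_value_Icc pi_pos.le hcont.continuousOn hmem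
    obtain ⟨θ, hθ1, hθ2⟩ := this
    exact ⟨θ, hθ1, hθ2⟩
  choose θs hθmem hθval using hex
  refine ⟨θs, ?_, hθmem, ?_⟩
  · intro i j hij
    by_contra h
    push_neg at h
    have h1 : f (θs j) ≤ f (θs i) :=
      hmono.monotoneOn (hθmem j) (hθmem i) h
    rw [hθval i, hθval j] at h1
    have : (i : ℝ) < (j : ℝ) := by exact_mod_cast hij
    nlinarith [pi_pos]
  · intro j
    have : f (θs j) = (j : ℕ) * π := hθval j
    rw [show ((t + t : ℤ) : ℝ) * θs j / 2 + π * m / 2 - π * m / 2 * Real.cos (θs j)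
        = f (θs j) from rfl, this]
    have := Real.cos_nat_mul_pi_sub 0 (j : ℕ)
    simp at this
    rw [show ((j : ℕ) : ℝ) * π = (j : ℕ) * π - 0 by ring, Real.cos_nat_mul_pi_sub 0 (j : ℕ)]
    simp
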